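/- Let δ = (2π)^{−1/2} e^{−1/6}. For every 0 < p < 1 with q = 1 − p, and all integers n, k with 1 ≤ k ≤ n−1, the single binomial term satisfies C(n,k)·p^k·q^{n−k} ≥ δ · max{k^{−1/2}, (n−k)^{−1/2}} · exp(−n·Λ*(k/n)). -/

import Mathlib

open MeasureTheory Filter
open scoped ENNReal NNReal

/-- The Bernoulli(p) measure on `Bool`. -/
noncomputable def bernoulliBool (p : ℝ) : Measure Bool :=
  p.toNNReal • Measure.dirac true + (1 - p).toNNReal • Measure.dirac false

instance (p : ℝ) : IsFiniteMeasure (bernoulliBool p) := by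
  unfold bernoulliBool; infer_instance

instance (n : ℕ) : MeasurableSpace (SimpleGraph (Fin n)) := ⊤

/-- The Erdős–Rényi random graph `G(n,p)`: the distribution of the simple graph on `Fin n`
obtained by including each possible edge independently with probability `p`. -/
noncomputable def erMeasure (n : ℕ) (p : ℝ) : Measure (SimpleGraph (Fin n)) :=
  Measure.map (fun f : Sym2 (Fin n) → Bool => SimpleGraph.fromEdgeSet {e | f e = true})
    (Measure.pi fun _ : Sym2 (Fin n) => bernoulliBool p)

/-- A set `S` of vertices is `t`-dependent if the induced subgraph has maximum degree at most `t`,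
i.e. every vertex of `S` has at most `t` neighbours inside `S`. -/
def IsTDependent {V : Type*} (G : SimpleGraph V) (t : ℕ) (S : Set V) : Prop :=
  ∀ v ∈ S, {u ∈ S | G.Adj v u}.ncard ≤ t

/-- The `t`-improper chromatic number: the least number of colours in a vertex colouring
in which every colour class is `t`-dependent. -/
noncomputable def improperChromaticNumber {V : Type*} (G : SimpleGraph V) (t : ℕ) : ℕ :=
  sInf {k | ∃ c : V → Fin k, ∀ i : Fin k, IsTDependent G t {v | c v = i}}

/-- The `t`-dependence number: the maximum size of a `t`-dependent set. -/
noncomputable def tDependenceNumber {V : Type*} (G : SimpleGraph V) (t : ℕ) : ℕ :=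
  sSup {m | ∃ S : Set V, S.ncard = m ∧ IsTDependent G t S}

/-- The Fenchel–Legendre transform `Λ*(x) = x ln(x/p) + (1-x) ln((1-x)/(1-p))`
(with the conventions `Λ*(0) = ln(1/(1-p))`, `Λ*(1) = ln(1/p)`, which hold automatically
since `Real.log 0 = 0` in Lean). -/
noncomputable def LambdaStar (p x : ℝ) : ℝ :=
  x * Real.log (x / p) + (1 - x) * Real.log ((1 - x) / (1 - p))


lemma exp_11_6_le : Real.exp (11/6) ≤ 2 * Real.pi := by
  have h1 : Real.exp 1 < 2.7182818286 := Real.exp_one_lt_d9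
  have h2 : (3.141592 : ℝ) < Real.pi := Real.pi_gt_d6
  have hpow : Real.exp (11/6) ^ 6 ≤ (2 * Real.pi) ^ 6 := by
    have e1 : Real.exp (11/6) ^ 6 = Real.exp 1 ^ 11 := by
      rw [← Real.exp_nat_mul, ← Real.exp_nat_mul]; norm_num
    rw [e1]
    calc Real.exp 1 ^ 11 ≤ (2.7182818286:ℝ) ^ 11 :=
          pow_le_pow_left₀ (Real.exp_pos 1).le h1.le 11
      _ ≤ (2 * 3.141592 : ℝ) ^ 6 := by norm_num
      _ ≤ (2 * Real.pi) ^ 6 := by gcongr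
  exact le_of_pow_le_pow_left₀ (by norm_num) (by positivity) hpow

lemma stirling_lb (m : ℕ) (hm : 1 ≤ m) : Real.sqrt Real.pi ≤ Stirling.stirlingSeq m := by
  obtain ⟨m, rfl⟩ := Nat.exists_eq_succ_of_ne_zero (by omega : m ≠ 0)
  exact Stirling.stirlingSeq'_antitone.le_of_tendsto
    ((Filter.tendsto_add_atTop_iff_nat 1).2 Stirling.tendsto_stirlingSeq_sqrt_pi) m

lemma stirling_ub (m : ℕ) (hm : 1 ≤ m) :
    Stirling.stirlingSeq m ≤ Real.exp 1 / Real.sqrt 2 := by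
  obtain ⟨m, rfl⟩ := Nat.exists_eq_succ_of_ne_zero (by omega : m ≠ 0)
  have := Stirling.stirlingSeq'_antitone (Nat.zero_le m)
  simpa [Stirling.stirlingSeq_one] using this

lemma factorial_eq (m : ℕ) (hm : 1 ≤ m) :
    (m.factorial : ℝ) = Stirling.stirlingSeq m * (Real.sqrt (2*m) * ((m : ℝ)/Real.exp 1)^m) := by
  have hm' : (0:ℝ) < m := by exact_mod_cast hm
  have hd : (0:ℝ) < Real.sqrt (2*m) * ((m:ℝ)/Real.exp 1)^m :=
    mul_pos (Real.sqrt_pos.2 (by linarith)) (pow_pos (div_pos hm' (Real.exp_pos 1)) m)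
  rw [Stirling.stirlingSeq, div_mul_cancel₀ _ hd.ne']

lemma lastA (K J : ℝ) (hK : 1 ≤ K) (hJ : 1 ≤ J) :
    (Real.sqrt (2*Real.pi))⁻¹ * Real.exp (-(1/6)) * (Real.sqrt K)⁻¹ ≤
      Real.sqrt Real.pi * Real.sqrt (2*(K+J)) /
        ((Real.exp 1 / Real.sqrt 2)^2 * (Real.sqrt (2*K) * Real.sqrt (2*J))) := by
  have hpi : (0:ℝ) < Real.pi := Real.pi_pos
  have hK0 : (0:ℝ) < K := by linarith
  have hJ0 : (0:ℝ) < J := by linarith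
  set A := (Real.sqrt (2*Real.pi))⁻¹ * Real.exp (-(1/6)) * (Real.sqrt K)⁻¹ with hA
  set B := Real.sqrt Real.pi * Real.sqrt (2*(K+J)) /
        ((Real.exp 1 / Real.sqrt 2)^2 * (Real.sqrt (2*K) * Real.sqrt (2*J))) with hB
  have hApos : 0 < A := by
    apply mul_pos (mul_pos _ (Real.exp_pos _)) <;>
      first
        | exact inv_pos.2 (Real.sqrt_pos.2 (by linarith))
        | skip
  have hBpos : 0 < B := by
    apply div_pos (mul_pos (Real.sqrt_pos.2 hpi) (Real.sqrt_pos.2 (by linarith)))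
    apply mul_pos (pow_pos (div_pos (Real.exp_pos 1) (Real.sqrt_pos.2 (by norm_num))) 2)
    exact mul_pos (Real.sqrt_pos.2 (by linarith)) (Real.sqrt_pos.2 (by linarith))
  have hA2 : A^2 = Real.exp (-(1/3)) / (2*Real.pi*K) := by
    rw [hA, mul_pow, mul_pow, inv_pow, inv_pow, Real.sq_sqrt (by positivity),
      Real.sq_sqrt hK0.le, ← Real.exp_nat_mul,
      show ((2:ℕ):ℝ) * (-(1/6)) = -(1/3) by norm_num]
    field_simp
  have hB2 : B^2 = (2*Real.pi*(K+J)) / (Real.exp 1^4 * (K*J)) := by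
    have h2 : (Real.sqrt 2)^(2*2) = 4 := by
      rw [pow_mul, Real.sq_sqrt (by norm_num : (0:ℝ) ≤ 2)]; norm_num
    rw [hB, div_pow, mul_pow, mul_pow, mul_pow, ← pow_mul, div_pow,
      Real.sq_sqrt hpi.le, Real.sq_sqrt (by linarith : (0:ℝ) ≤ 2*(K+J)),
      Real.sq_sqrt (by linarith : (0:ℝ) ≤ 2*K), Real.sq_sqrt (by linarith : (0:ℝ) ≤ 2*J),
      h2, show ((Real.exp 1)^(2*2) : ℝ) = Real.exp 1 ^ 4 by norm_num]
    field_simp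
    ring
  have key : Real.exp (11/3) ≤ 4 * Real.pi^2 := by
    have h := exp_11_6_le
    nlinarith [Real.exp_pos (11/6), Real.exp_add (11/6) (11/6), Real.exp_pos (11/3)]
  have hsq : A^2 ≤ B^2 := by
    rw [hA2, hB2, div_le_div_iff₀ (by positivity) (by positivity)]
    have hmix : Real.exp (-(1/3)) * Real.exp 1 ^ 4 = Real.exp (11/3) := by
      rw [← Real.exp_nat_mul, ← Real.exp_add]; norm_num
    nlinarith [mul_pos hK0 hJ0, mul_pos hK0 hK0, Real.exp_pos (-(1/3)), sq_nonneg K,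
      mul_le_mul_of_nonneg_right key (mul_nonneg hK0.le hJ0.le),
      mul_le_mul_of_nonneg_right key (mul_nonneg hK0.le hK0.le)]
  calc A = Real.sqrt (A^2) := (Real.sqrt_sq hApos.le).symm
    _ ≤ Real.sqrt (B^2) := Real.sqrt_le_sqrt hsq
    _ = B := Real.sqrt_sq hBpos.le

/-- With `δ = (2π)^{-1/2}·e^{-1/6}`, for all `0 < p < 1` and integers
`1 ≤ k ≤ n-1`, the binomial term satisfies
`C(n,k)·p^k·(1-p)^{n-k} ≥ δ·max{k^{-1/2}, (n-k)^{-1/2}}·exp(-n·Λ*(k/n))`. -/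
theorem stmt6 (p : ℝ) (hp0 : 0 < p) (hp1 : p < 1) (n k : ℕ) (hk1 : 1 ≤ k) (hkn : k < n) :
    ((2 * Real.pi) ^ (-(1/2) : ℝ) * Real.exp (-(1/6))) *
        max ((k : ℝ) ^ (-(1/2) : ℝ)) (((n : ℝ) - (k : ℝ)) ^ (-(1/2) : ℝ)) *
        Real.exp (-((n : ℝ) * LambdaStar p ((k : ℝ) / n)))
      ≤ (n.choose k : ℝ) * p ^ k * (1 - p) ^ (n - k) := by
  have hq : 0 < 1 - p := by linarith
  set j := n - k with hj
  have hj1 : 1 ≤ j := by omega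
  have hnkj : n = k + j := by omega
  have hK0 : (0:ℝ) < (k:ℝ) := by exact_mod_cast hk1
  have hJ0 : (0:ℝ) < (j:ℝ) := by exact_mod_cast hj1
  have hK1 : (1:ℝ) ≤ (k:ℝ) := by exact_mod_cast hk1
  have hJ1 : (1:ℝ) ≤ (j:ℝ) := by exact_mod_cast hj1
  set K := (k:ℝ) with hKdef
  set J := (j:ℝ) with hJdef
  set N := (n:ℝ) with hNdef
  have hN : N = K + J := by rw [hNdef, hKdef, hJdef, hnkj]; push_cast; ring
  have hN0 : (0:ℝ) < N := by rw [hN]; linarith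
  have hcast : N - K = J := by rw [hN]; ring
  rw [hcast]
  have hx0 : 0 < K/N := div_pos hK0 hN0
  have h1x : 1 - K/N = J/N := by
    rw [hN]; field_simp; ring
  have hlam : N * LambdaStar p (K/N) =
      (k:ℝ) * Real.log ((K/N)/p) + (j:ℝ) * Real.log ((J/N)/(1-p)) := by
    rw [LambdaStar, h1x]
    field_simp
    rw [hKdef, hJdef]; ring
  have hE1 : Real.exp (-(N * LambdaStar p (K/N))) = (p/(K/N))^k * ((1-p)/(J/N))^j := by
    rw [hlam, neg_add, Real.exp_add]
    congr 1
    · rw [show -((k:ℝ) * Real.log (K/N/p)) = (k:ℝ) * Real.log (p/(K/N)) by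
        rw [show p/(K/N) = (K/N/p)⁻¹ from (inv_div _ _).symm, Real.log_inv]; ring]
      rw [Real.exp_nat_mul, Real.exp_log (by positivity)]
    · rw [show -((j:ℝ) * Real.log (J/N/(1-p))) = (j:ℝ) * Real.log ((1-p)/(J/N)) by
        rw [show (1-p)/(J/N) = (J/N/(1-p))⁻¹ from (inv_div _ _).symm, Real.log_inv]; ring]
      rw [Real.exp_nat_mul, Real.exp_log (by positivity)]
  have hcancel1 : (K/N) * (p/(K/N)) = p := by field_simp
  have hcancel2 : (J/N) * ((1-p)/(J/N)) = 1 - p := by field_simp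
  have hPE : (n.choose k:ℝ) * p^k * (1-p)^j
      = ((n.choose k:ℝ) * (K/N)^k * (J/N)^j) * Real.exp (-(N * LambdaStar p (K/N))) := by
    rw [hE1]
    calc (n.choose k:ℝ) * p^k * (1-p)^j
        = (n.choose k:ℝ) * ((K/N) * (p/(K/N)))^k * ((J/N) * ((1-p)/(J/N)))^j := by
          rw [hcancel1, hcancel2]
      _ = ((n.choose k:ℝ) * (K/N)^k * (J/N)^j) * ((p/(K/N))^k * ((1-p)/(J/N))^j) := by
          rw [mul_pow, mul_pow]; ring
  rw [hPE]
  apply mul_le_mul_of_nonneg_right _ (Real.exp_pos _).le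
  -- now: δ * max ≤ choose * (K/N)^k * (J/N)^j
  have hr : ∀ x:ℝ, 0 < x → x^(-(1/2):ℝ) = (Real.sqrt x)⁻¹ := fun x hx => by
    rw [Real.rpow_neg hx.le, ← Real.sqrt_eq_rpow]
  rw [hr K hK0, hr J hJ0, hr _ (by positivity : (0:ℝ) < 2*Real.pi)]
  have hnf : Real.sqrt Real.pi * (Real.sqrt (2*N) * (N/Real.exp 1)^n) ≤ (n.factorial:ℝ) := by
    rw [factorial_eq n (by omega)]
    exact mul_le_mul_of_nonneg_right (stirling_lb n (by omega)) (by positivity)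
  have hkf : (k.factorial:ℝ) ≤ (Real.exp 1/Real.sqrt 2) * (Real.sqrt (2*K) * (K/Real.exp 1)^k) := by
    rw [factorial_eq k hk1]
    exact mul_le_mul_of_nonneg_right (stirling_ub k hk1) (by positivity)
  have hjf : (j.factorial:ℝ) ≤ (Real.exp 1/Real.sqrt 2) * (Real.sqrt (2*J) * (J/Real.exp 1)^j) := by
    rw [factorial_eq j hj1]
    exact mul_le_mul_of_nonneg_right (stirling_ub j hj1) (by positivity)
  have hch : (n.choose k : ℝ) = (n.factorial:ℝ) / ((k.factorial:ℝ) * (j.factorial:ℝ)) := by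
    have h := Nat.choose_mul_factorial_mul_factorial hkn.le
    rw [eq_div_iff (by positivity)]
    rw [hj]
    push_cast [← h]
    ring
  have hKe : (0:ℝ) < (K/Real.exp 1)^k := pow_pos (div_pos hK0 (Real.exp_pos 1)) k
  have hJe : (0:ℝ) < (J/Real.exp 1)^j := pow_pos (div_pos hJ0 (Real.exp_pos 1)) j
  have hNe : (0:ℝ) < (N/Real.exp 1)^n := pow_pos (div_pos hN0 (Real.exp_pos 1)) n
  have hfrac : (Real.sqrt Real.pi * (Real.sqrt (2*N) * (N/Real.exp 1)^n)) /
      ((Real.exp 1/Real.sqrt 2) * (Real.sqrt (2*K) * (K/Real.exp 1)^k) *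
       ((Real.exp 1/Real.sqrt 2) * (Real.sqrt (2*J) * (J/Real.exp 1)^j)))
      ≤ (n.choose k : ℝ) := by
    rw [hch]
    apply div_le_div₀ (by positivity) hnf (by positivity)
    exact mul_le_mul hkf hjf (by positivity) (by positivity)
  have hid : (N/Real.exp 1)^n * ((K/N)^k * (J/N)^j)
      = (K/Real.exp 1)^k * (J/Real.exp 1)^j := by
    rw [hnkj, pow_add]
    field_simp
    have ha : N^k * N⁻¹^k = 1 := by rw [← mul_pow, mul_inv_cancel₀ hN0.ne', one_pow]
    have hb : N^j * N⁻¹^j = 1 := by rw [← mul_pow, mul_inv_cancel₀ hN0.ne', one_pow]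
    linear_combination ((Real.exp 1)⁻¹ ^ k * (Real.exp 1)⁻¹ ^ j * K ^ k * J ^ j * (N^j * N⁻¹^j)) * ha + ((Real.exp 1)⁻¹ ^ k * (Real.exp 1)⁻¹ ^ j * K ^ k * J ^ j) * hb
  have hmid : Real.sqrt Real.pi * Real.sqrt (2*N) /
        ((Real.exp 1/Real.sqrt 2)^2 * (Real.sqrt (2*K) * Real.sqrt (2*J)))
      = (Real.sqrt Real.pi * (Real.sqrt (2*N) * (N/Real.exp 1)^n)) /
        ((Real.exp 1/Real.sqrt 2) * (Real.sqrt (2*K) * (K/Real.exp 1)^k) *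
         ((Real.exp 1/Real.sqrt 2) * (Real.sqrt (2*J) * (J/Real.exp 1)^j)))
        * ((K/N)^k * (J/N)^j) := by
    rw [div_mul_eq_mul_div,
      show Real.sqrt Real.pi * (Real.sqrt (2*N) * (N/Real.exp 1)^n) * ((K/N)^k * (J/N)^j)
        = Real.sqrt Real.pi * Real.sqrt (2*N) * ((N/Real.exp 1)^n * ((K/N)^k * (J/N)^j)) by ring,
      hid,
      show (Real.exp 1/Real.sqrt 2) * (Real.sqrt (2*K) * (K/Real.exp 1)^k) *
         ((Real.exp 1/Real.sqrt 2) * (Real.sqrt (2*J) * (J/Real.exp 1)^j))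
        = ((Real.exp 1/Real.sqrt 2)^2 * (Real.sqrt (2*K) * Real.sqrt (2*J)))
          * ((K/Real.exp 1)^k * (J/Real.exp 1)^j) by ring,
      mul_div_mul_right _ _ (by positivity : ((K/Real.exp 1)^k * (J/Real.exp 1)^j) ≠ 0)]
  calc (Real.sqrt (2*Real.pi))⁻¹ * Real.exp (-(1/6)) * max (Real.sqrt K)⁻¹ (Real.sqrt J)⁻¹
      ≤ Real.sqrt Real.pi * Real.sqrt (2*N) /
          ((Real.exp 1/Real.sqrt 2)^2 * (Real.sqrt (2*K) * Real.sqrt (2*J))) := by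
        rcases max_choice (Real.sqrt K)⁻¹ (Real.sqrt J)⁻¹ with h | h <;> rw [h]
        · have := lastA K J hK1 hJ1
          rwa [← hN] at this
        · have := lastA J K hJ1 hK1
          rwa [show J + K = K + J by ring, ← hN,
            show Real.sqrt (2*J) * Real.sqrt (2*K) = Real.sqrt (2*K) * Real.sqrt (2*J) by ring]
            at this
    _ = (Real.sqrt Real.pi * (Real.sqrt (2*N) * (N/Real.exp 1)^n)) /
        ((Real.exp 1/Real.sqrt 2) * (Real.sqrt (2*K) * (K/Real.exp 1)^k) *
         ((Real.exp 1/Real.sqrt 2) * (Real.sqrt (2*J) * (J/Real.exp 1)^j)))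
        * ((K/N)^k * (J/N)^j) := hmid
    _ ≤ (n.choose k : ℝ) * ((K/N)^k * (J/N)^j) :=
        mul_le_mul_of_nonneg_right hfrac (by positivity)
    _ = (n.choose k : ℝ) * (K/N)^k * (J/N)^j := by ring
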